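/- arXiv:2303.04379 — 3 statements merged into one kernel-verified Lean document; each statement's English description precedes it below -/
import Mathlib

section
/- Let (X, Y) be a pair of random variables with values in 𝒳 × ℝ such that for almost every x, the conditional distribution of Y given X = x is absolutely continuous with respect to Lebesgue measure with density bounded by K_p. Then for every δ ∈ [0,1] and all measurable l, l' : 𝒳 → ℝ with the relevant integrals finite: E[L(l(X), Y)] − E[L(l'(X), Y)] ≥ E[(l(X) − l'(X))·((1 − δ) − 1{l(X) ≤ Y})] − K_p·E[(l(X) − l'(X))²]. -/
open MeasureTheory ProbabilityTheory

/-- Inner (conditional) bound: for a probability measure with Lebesgue density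
bounded by `Kp`, the conditional expectation inequality holds. -/
lemma pinball_inner (Kp : ℝ) (hKp : 0 < Kp) (ν : Measure ℝ) [IsProbabilityMeasure ν]
    (hac : ν ≪ (volume : Measure ℝ))
    (hbd : ∀ᵐ y ∂(volume : Measure ℝ), ν.rnDeriv volume y ≤ ENNReal.ofReal Kp)
    (δ a b : ℝ) :
    0 ≤ ∫ y, (((1 - δ) * a - min (a - y) 0) - ((1 - δ) * b - min (b - y) 0)
        - (a - b) * ((1 - δ) - if a ≤ y then (1 : ℝ) else 0) + Kp * (a - b) ^ 2) ∂ν := by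
  set f : ℝ → ℝ := fun y => ((1 - δ) * a - min (a - y) 0) - ((1 - δ) * b - min (b - y) 0)
      - (a - b) * ((1 - δ) - if a ≤ y then (1 : ℝ) else 0) + Kp * (a - b) ^ 2 with hf
  set I : Set ℝ := Set.Ico (min a b) (max a b) with hI
  set g : ℝ → ℝ := fun y => Kp * (a - b) ^ 2 - |a - b| * I.indicator (fun _ => (1 : ℝ)) y with hg
  -- pointwise bound g ≤ f
  have hpt : ∀ y, g y ≤ f y := by
    intro y
    simp only [hf, hg]
    by_cases hy : y ∈ I
    · rw [Set.indicator_of_mem hy]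
      obtain ⟨hm, hM⟩ := Set.mem_Ico.mp hy
      rcases le_total a b with hab | hab
      · rw [min_eq_left hab] at hm
        rw [max_eq_right hab] at hM
        rw [abs_of_nonpos (by linarith : a - b ≤ 0),
          min_eq_left (by linarith : a - y ≤ 0),
          min_eq_right (by linarith : (0:ℝ) ≤ b - y), if_pos hm]
        nlinarith [hm, hM]
      · rw [min_eq_right hab] at hm
        rw [max_eq_left hab] at hM
        rw [abs_of_nonneg (by linarith : (0:ℝ) ≤ a - b),
          min_eq_right (by linarith : (0:ℝ) ≤ a - y),
          min_eq_left (by linarith : b - y ≤ 0), if_neg (not_le.mpr hM)]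
        nlinarith [hm, hM]
    · rw [Set.indicator_of_notMem hy, mul_zero]
      rw [hI, Set.mem_Ico, not_and, not_lt] at hy
      rcases le_total (min a b) y with hm | hm
      · have hM := hy hm
        have ha : a ≤ y := le_trans (le_max_left a b) hM
        have hb : b ≤ y := le_trans (le_max_right a b) hM
        rw [min_eq_left (by linarith : a - y ≤ 0),
          min_eq_left (by linarith : b - y ≤ 0), if_pos ha]
        nlinarith []
      · have hya : y ≤ a := le_trans hm (min_le_left a b)
        have hyb : y ≤ b := le_trans hm (min_le_right a b)
        rw [min_eq_right (by linarith : (0:ℝ) ≤ a - y),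
          min_eq_right (by linarith : (0:ℝ) ≤ b - y)]
        by_cases hay : a ≤ y
        · have hya' : a = y := le_antisymm hay hya
          have hM : max a b ≤ y := hy (le_trans (min_le_left a b) hay)
          have hb : b ≤ y := le_trans (le_max_right a b) hM
          rw [if_pos hay]
          nlinarith [hya', hb, hyb]
        · rw [if_neg hay]
          nlinarith []
  -- measurability of f
  have hmf : Measurable f := by
    have : Measurable fun y : ℝ => (if a ≤ y then (1:ℝ) else 0) :=
      Measurable.ite (measurableSet_le measurable_const measurable_id)
        measurable_const measurable_const
    fun_prop
  -- integrability of f : it is bounded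
  have hbound : ∀ y, ‖f y‖ ≤ 2 * |a - b| + Kp * (a - b) ^ 2 := by
    intro y
    have h1 : |(-min (a - y) 0 + min (b - y) 0)| ≤ |a - b| := by
      rcases le_total a y with h | h <;> rcases le_total b y with h' | h'
      · rw [min_eq_left (by linarith : a - y ≤ 0), min_eq_left (by linarith : b - y ≤ 0)]
        rcases abs_cases (a - b) with ⟨e, hs⟩ | ⟨e, hs⟩ <;> rw [abs_le] <;>
          constructor <;> linarith
      · rw [min_eq_left (by linarith : a - y ≤ 0), min_eq_right (by linarith : (0:ℝ) ≤ b - y)]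
        rcases abs_cases (a - b) with ⟨e, hs⟩ | ⟨e, hs⟩ <;> rw [abs_le] <;>
          constructor <;> linarith
      · rw [min_eq_right (by linarith : (0:ℝ) ≤ a - y), min_eq_left (by linarith : b - y ≤ 0)]
        rcases abs_cases (a - b) with ⟨e, hs⟩ | ⟨e, hs⟩ <;> rw [abs_le] <;>
          constructor <;> linarith
      · rw [min_eq_right (by linarith : (0:ℝ) ≤ a - y), min_eq_right (by linarith : (0:ℝ) ≤ b - y)]
        rcases abs_cases (a - b) with ⟨e, hs⟩ | ⟨e, hs⟩ <;> rw [abs_le] <;>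
          constructor <;> linarith
    have h2 : |(a - b) * (if a ≤ y then (1:ℝ) else 0)| ≤ |a - b| := by
      split_ifs <;> simp [abs_mul]
    simp only [hf, Real.norm_eq_abs]
    have hrw : ((1 - δ) * a - min (a - y) 0) - ((1 - δ) * b - min (b - y) 0)
        - (a - b) * ((1 - δ) - if a ≤ y then (1 : ℝ) else 0) + Kp * (a - b) ^ 2
        = (-min (a - y) 0 + min (b - y) 0) + (a - b) * (if a ≤ y then (1:ℝ) else 0)
          + Kp * (a - b) ^ 2 := by ring
    rw [hrw]
    calc |(-min (a - y) 0 + min (b - y) 0) + (a - b) * (if a ≤ y then (1:ℝ) else 0)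
          + Kp * (a - b) ^ 2|
        ≤ |(-min (a - y) 0 + min (b - y) 0)| + |(a - b) * (if a ≤ y then (1:ℝ) else 0)|
          + |Kp * (a - b) ^ 2| := abs_add_three _ _ _
      _ ≤ 2 * |a - b| + Kp * (a - b) ^ 2 := by
          rw [abs_of_nonneg (mul_nonneg hKp.le (sq_nonneg _))]; linarith
  have hintf : Integrable f ν :=
    (integrable_const (2 * |a - b| + Kp * (a - b) ^ 2)).mono'
      hmf.aestronglyMeasurable (ae_of_all _ hbound)
  have hmeasI : MeasurableSet I := measurableSet_Ico
  have hintg : Integrable g ν := by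
    apply Integrable.sub (integrable_const _)
    exact (Integrable.indicator (integrable_const _) hmeasI).const_mul _
  -- ν I ≤ Kp * |a - b|
  have hνI : (ν I).toReal ≤ Kp * |a - b| := by
    have h1 : ν I = ∫⁻ y in I, ν.rnDeriv volume y ∂volume :=
      (Measure.setLIntegral_rnDeriv hac I).symm
    have h2 : ∫⁻ y in I, ν.rnDeriv volume y ∂volume
        ≤ ∫⁻ _ in I, ENNReal.ofReal Kp ∂volume := by
      refine setLIntegral_mono_ae ?_ ?_
      · exact measurable_const.aemeasurable
      · filter_upwards [hbd] with y hy using fun _ => hy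
    have h3 : ∫⁻ _ in I, ENNReal.ofReal Kp ∂(volume : Measure ℝ)
        = ENNReal.ofReal Kp * volume I := by
      rw [setLIntegral_const]
    have h4 : volume I = ENNReal.ofReal |a - b| := by
      rw [hI, Real.volume_Ico]
      congr 1
      rcases le_total a b with h | h <;>
        simp [abs_of_nonneg, abs_of_nonpos, min_eq_left, min_eq_right, max_eq_left,
          max_eq_right, h] <;> cases abs_cases (a-b) <;> linarith
    have h5 : ν I ≤ ENNReal.ofReal (Kp * |a - b|) := by
      rw [h1]
      calc _ ≤ _ := h2
        _ = ENNReal.ofReal Kp * ENNReal.ofReal |a-b| := by rw [h3, h4]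
        _ = ENNReal.ofReal (Kp * |a - b|) := (ENNReal.ofReal_mul hKp.le).symm
    calc (ν I).toReal ≤ (ENNReal.ofReal (Kp * |a - b|)).toReal :=
          ENNReal.toReal_mono ENNReal.ofReal_ne_top h5
      _ = Kp * |a - b| := ENNReal.toReal_ofReal (by positivity)
  -- integral of g
  have hgint : ∫ y, g y ∂ν = Kp * (a - b) ^ 2 - |a - b| * (ν I).toReal := by
    rw [hg]
    rw [integral_sub (integrable_const _)
      ((Integrable.indicator (integrable_const _) hmeasI).const_mul _)]
    rw [integral_const, integral_const_mul, integral_indicator_const _ hmeasI]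
    simp [measure_univ, measureReal_def]
  have : 0 ≤ ∫ y, g y ∂ν := by
    rw [hgint]
    have habs : |a - b| * (ν I).toReal ≤ |a - b| * (Kp * |a - b|) := by
      apply mul_le_mul_of_nonneg_left hνI (abs_nonneg _)
    have : |a - b| * (Kp * |a - b|) = Kp * (a - b) ^ 2 := by
      rw [← sq_abs]; ring
    linarith
  calc (0:ℝ) ≤ ∫ y, g y ∂ν := this
    _ ≤ ∫ y, f y ∂ν := integral_mono hintg hintf hpt

/-- Smoothness-like potential property of the pinball-type potential
`L(l, y) = (1 - δ)·l - min(l - y, 0)`: if the conditional distribution of `Y` given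
`X = x` has Lebesgue density bounded by `K_p` (for a.e. `x`), then
`E[L(l(X),Y)] - E[L(l'(X),Y)] ≥ E[(l(X) - l'(X))·((1-δ) - 1{l(X) ≤ Y})]
  - K_p · E[(l(X) - l'(X))²]`. -/
theorem pinball_potential_smooth {𝒳 : Type*} [MeasurableSpace 𝒳]
    (μ : Measure (𝒳 × ℝ)) [IsProbabilityMeasure μ]
    (κy : Kernel 𝒳 ℝ) [IsMarkovKernel κy]
    (hdecomp : μ = μ.fst ⊗ₘ κy)
    (Kp : ℝ) (hKp : 0 < Kp)
    (hdensity : ∀ᵐ x ∂μ.fst, κy x ≪ (volume : Measure ℝ) ∧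
      ∀ᵐ y ∂(volume : Measure ℝ),
        (κy x).rnDeriv volume y ≤ ENNReal.ofReal Kp)
    (δ : ℝ) (hδ : δ ∈ Set.Icc (0 : ℝ) 1)
    (l l' : 𝒳 → ℝ) (hl : Measurable l) (hl' : Measurable l')
    (hint1 : Integrable (fun q : 𝒳 × ℝ => (1 - δ) * l q.1 - min (l q.1 - q.2) 0) μ)
    (hint2 : Integrable (fun q : 𝒳 × ℝ => (1 - δ) * l' q.1 - min (l' q.1 - q.2) 0) μ)
    (hint3 : Integrable (fun q : 𝒳 × ℝ =>
      (l q.1 - l' q.1) * ((1 - δ) - if l q.1 ≤ q.2 then (1 : ℝ) else 0)) μ)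
    (hint4 : Integrable (fun q : 𝒳 × ℝ => (l q.1 - l' q.1) ^ 2) μ) :
    (∫ q, ((1 - δ) * l q.1 - min (l q.1 - q.2) 0) ∂μ)
        - (∫ q, ((1 - δ) * l' q.1 - min (l' q.1 - q.2) 0) ∂μ)
      ≥ (∫ q, (l q.1 - l' q.1) * ((1 - δ) - if l q.1 ≤ q.2 then (1 : ℝ) else 0) ∂μ)
        - Kp * ∫ q, (l q.1 - l' q.1) ^ 2 ∂μ := by
  set F : 𝒳 × ℝ → ℝ := fun q =>
    ((1 - δ) * l q.1 - min (l q.1 - q.2) 0) - ((1 - δ) * l' q.1 - min (l' q.1 - q.2) 0)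
      - (l q.1 - l' q.1) * ((1 - δ) - if l q.1 ≤ q.2 then (1 : ℝ) else 0)
      + Kp * (l q.1 - l' q.1) ^ 2 with hF
  have hintF : Integrable F μ := ((hint1.sub hint2).sub hint3).add (hint4.const_mul Kp)
  have hsplit : ∫ q, F q ∂μ
      = (∫ q, ((1 - δ) * l q.1 - min (l q.1 - q.2) 0) ∂μ)
        - (∫ q, ((1 - δ) * l' q.1 - min (l' q.1 - q.2) 0) ∂μ)
        - (∫ q, (l q.1 - l' q.1) * ((1 - δ) - if l q.1 ≤ q.2 then (1 : ℝ) else 0) ∂μ)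
        + Kp * ∫ q, (l q.1 - l' q.1) ^ 2 ∂μ := by
    have hA : Integrable (fun q : 𝒳 × ℝ =>
        ((1 - δ) * l q.1 - min (l q.1 - q.2) 0) - ((1 - δ) * l' q.1 - min (l' q.1 - q.2) 0)) μ :=
      hint1.sub hint2
    have hB : Integrable (fun q : 𝒳 × ℝ =>
        (((1 - δ) * l q.1 - min (l q.1 - q.2) 0) - ((1 - δ) * l' q.1 - min (l' q.1 - q.2) 0))
          - (l q.1 - l' q.1) * ((1 - δ) - if l q.1 ≤ q.2 then (1 : ℝ) else 0)) μ :=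
      hA.sub hint3
    have hKD : Integrable (fun q : 𝒳 × ℝ => Kp * (l q.1 - l' q.1) ^ 2) μ :=
      hint4.const_mul Kp
    simp only [hF]
    rw [integral_add hB hKD, integral_sub hA hint3, integral_sub hint1 hint2,
      integral_const_mul]
  have h0 : 0 ≤ ∫ q, F q ∂μ := by
    have hintF' : Integrable F (μ.fst ⊗ₘ κy) := hdecomp ▸ hintF
    rw [hdecomp, Measure.integral_compProd hintF']
    apply integral_nonneg_of_ae
    filter_upwards [hdensity] with x hx
    obtain ⟨hac, hbd⟩ := hx
    exact pinball_inner Kp hKp (κy x) hac hbd δ (l x) (l' x)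
  rw [hsplit] at h0
  linarith
end

section
/- Let (X, Y) be a pair of random variables with values in 𝒳 × ℝ such that for almost every x the conditional distribution of Y given X = x is absolutely continuous with respect to Lebesgue measure with density bounded by K_p. Fix δ ∈ [0,1] and let l* : 𝒳 → ℝ be measurable with P(Y ≤ l*(X) | X) = δ almost surely. Then for every measurable l₀ : 𝒳 → ℝ with the relevant integrals finite: 0 ≤ E[L(l₀(X), Y)] − E[L(l*(X), Y)] ≤ K_p·E[(l₀(X) − l*(X))²]. -/
open MeasureTheory ProbabilityTheory

section AuxPinball
open Set

lemma vol_slice (a b : ℝ) (hab : a ≤ b) (y : ℝ) :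
    (((volume : Measure ℝ).restrict (Ioc a b)) (Iio y)).toReal = min y b - min y a := by
  rw [Measure.restrict_apply measurableSet_Iio]
  rcases le_or_gt y a with h | h
  · have : Iio y ∩ Ioc a b = ∅ := by
      ext t; simp only [mem_inter_iff, mem_Iio, mem_Ioc, mem_empty_iff_false, iff_false]
      rintro ⟨h1, h2, h3⟩; linarith
    rw [this]
    simp [min_eq_left h, min_eq_left (h.trans hab)]
  · rcases le_or_gt y b with h2 | h2
    · have : Iio y ∩ Ioc a b = Ioo a y := by
        ext t; simp only [mem_inter_iff, mem_Iio, mem_Ioc, mem_Ioo]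
        constructor
        · rintro ⟨h1, h3, h4⟩; exact ⟨h3, h1⟩
        · rintro ⟨h3, h4⟩; exact ⟨h4, h3, by linarith⟩
      rw [this, Real.volume_Ioo, ENNReal.toReal_ofReal (by linarith)]
      rw [min_eq_left h2, min_eq_right h.le]
    · have : Iio y ∩ Ioc a b = Ioc a b := by
        apply inter_eq_right.mpr
        intro t ht; exact ht.2.trans_lt h2
      rw [this, Real.volume_Ioc, ENNReal.toReal_ofReal (by linarith)]
      rw [min_eq_right h2.le, min_eq_right (by linarith : a ≤ y)]

lemma fubini_min (ν : Measure ℝ) [IsProbabilityMeasure ν] (a b : ℝ) (hab : a ≤ b) :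
    ∫ y, (min y b - min y a) ∂ν = ∫ t in Ioc a b, (ν (Ioi t)).toReal := by
  have hs : MeasurableSet {p : ℝ × ℝ | p.2 < p.1} := measurableSet_lt measurable_snd measurable_fst
  have h1 : (ν.prod ((volume : Measure ℝ).restrict (Ioc a b))) {p : ℝ × ℝ | p.2 < p.1}
      = ∫⁻ y, ((volume : Measure ℝ).restrict (Ioc a b)) (Iio y) ∂ν := by
    rw [Measure.prod_apply hs]; rfl
  have h2 : (ν.prod ((volume : Measure ℝ).restrict (Ioc a b))) {p : ℝ × ℝ | p.2 < p.1}
      = ∫⁻ t in Ioc a b, ν (Ioi t) := by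
    rw [Measure.prod_apply_symm hs]; rfl
  have m1 : Measurable fun y => ((volume : Measure ℝ).restrict (Ioc a b)) (Iio y) := by
    have := measurable_measure_prodMk_left (ν := (volume : Measure ℝ).restrict (Ioc a b)) hs
    exact this
  have m2 : Measurable fun t => ν (Ioi t) := by
    have := measurable_measure_prodMk_right (μ := ν) hs
    exact this
  have fin1 : ∀ y : ℝ, ((volume : Measure ℝ).restrict (Ioc a b)) (Iio y) < ⊤ := fun y =>
    lt_of_le_of_lt (measure_mono (subset_univ _))
      (by rw [Measure.restrict_apply_univ]; exact measure_Ioc_lt_top)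
  have e1 : ∫ y, (min y b - min y a) ∂ν
      = (∫⁻ y, ((volume : Measure ℝ).restrict (Ioc a b)) (Iio y) ∂ν).toReal := by
    rw [← integral_toReal m1.aemeasurable (Filter.Eventually.of_forall fin1)]
    exact integral_congr_ae (Filter.Eventually.of_forall fun y => (vol_slice a b hab y).symm)
  have e2 : ∫ t in Ioc a b, (ν (Ioi t)).toReal
      = (∫⁻ t in Ioc a b, ν (Ioi t)).toReal := by
    refine integral_toReal m2.aemeasurable ?_
    exact Filter.Eventually.of_forall fun t => measure_lt_top ν _
  rw [e1, e2, ← h1, ← h2]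
section
variable (ν : Measure ℝ) [IsProbabilityMeasure ν]

lemma F_diff (t s : ℝ) (hts : t ≤ s) :
    (ν (Iic s)).toReal - (ν (Iic t)).toReal = (ν (Ioc t s)).toReal := by
  have hd : Disjoint (Iic t) (Ioc t s) := by
    rw [disjoint_left]; rintro x hx ⟨h1, h2⟩; exact absurd hx (not_le.mpr h1)
  have h : ν (Iic s) = ν (Iic t) + ν (Ioc t s) := by
    rw [← measure_union hd measurableSet_Ioc, Iic_union_Ioc_eq_Iic hts]
  rw [h, ENNReal.toReal_add (measure_ne_top ν _) (measure_ne_top ν _)]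
  ring

lemma F_mono : Monotone fun t => (ν (Iic t)).toReal := fun t s h =>
  (ENNReal.toReal_le_toReal (measure_ne_top ν _) (measure_ne_top ν _)).mpr
    (measure_mono (Iic_subset_Iic.mpr h))

lemma density_bound (hac : ν ≪ volume) {Kp : ℝ} (hKp : 0 < Kp)
    (hbd : ∀ᵐ y ∂(volume : Measure ℝ), ν.rnDeriv volume y ≤ ENNReal.ofReal Kp)
    (t s : ℝ) (hts : t ≤ s) : (ν (Ioc t s)).toReal ≤ Kp * (s - t) := by
  have h1 : ν (Ioc t s) = ∫⁻ y in Ioc t s, ν.rnDeriv volume y ∂volume :=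
    (Measure.setLIntegral_rnDeriv hac _).symm
  have h2 : ∫⁻ y in Ioc t s, ν.rnDeriv volume y ∂volume
      ≤ ∫⁻ _ in Ioc t s, ENNReal.ofReal Kp ∂volume :=
    lintegral_mono_ae (ae_restrict_of_ae hbd)
  have h3 : ∫⁻ _ in Ioc t s, ENNReal.ofReal Kp ∂(volume : Measure ℝ)
      = ENNReal.ofReal (Kp * (s - t)) := by
    rw [setLIntegral_const, Real.volume_Ioc,
      ← ENNReal.ofReal_mul (le_of_lt hKp)]
  have : ν (Ioc t s) ≤ ENNReal.ofReal (Kp * (s - t)) := h1 ▸ (h2.trans h3.le)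
  calc (ν (Ioc t s)).toReal ≤ (ENNReal.ofReal (Kp * (s - t))).toReal :=
        (ENNReal.toReal_le_toReal (measure_ne_top ν _) ENNReal.ofReal_ne_top).mpr this
    _ = Kp * (s - t) := ENNReal.toReal_ofReal (by nlinarith)

end

lemma min_shift (b y : ℝ) : min (b - y) 0 = min b y - y := by
  rcases le_total b y with h | h
  · rw [min_eq_left (by linarith), min_eq_left h]
  · rw [min_eq_right (by linarith), min_eq_right h]; ring

lemma inner_bound (ν : Measure ℝ) [IsProbabilityMeasure ν] (hac : ν ≪ volume)
    {Kp : ℝ} (hKp : 0 < Kp)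
    (hbd : ∀ᵐ y ∂(volume : Measure ℝ), ν.rnDeriv volume y ≤ ENNReal.ofReal Kp)
    {δ : ℝ} (hδ0 : 0 ≤ δ) (a b : ℝ) (hq : ν (Iic a) = ENNReal.ofReal δ) :
    0 ≤ ∫ y, (((1 - δ) * b - min (b - y) 0) - ((1 - δ) * a - min (a - y) 0)) ∂ν ∧
      ∫ y, (((1 - δ) * b - min (b - y) 0) - ((1 - δ) * a - min (a - y) 0)) ∂ν
        ≤ Kp * (b - a) ^ 2 := by
  set F : ℝ → ℝ := fun t => (ν (Iic t)).toReal with hF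
  have Fa : F a = δ := by rw [hF]; simp only; rw [hq, ENNReal.toReal_ofReal hδ0]
  have hIoi : ∀ t : ℝ, (ν (Ioi t)).toReal = 1 - F t := by
    intro t
    have h1 : ν (Ioi t) = 1 - ν (Iic t) := by
      rw [← Set.compl_Iic, measure_compl measurableSet_Iic (measure_ne_top _ _), measure_univ]
    rw [h1, ENNReal.toReal_sub_of_le prob_le_one ENNReal.one_ne_top, ENNReal.toReal_one]
  -- rewrite integrand
  have hrw : (fun y => (((1 - δ) * b - min (b - y) 0) - ((1 - δ) * a - min (a - y) 0)))
      = fun y => (1 - δ) * (b - a) + (min y a - min y b) := by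
    funext y; rw [min_shift b y, min_shift a y, min_comm y a, min_comm y b]; ring
  have hm : Measurable fun y : ℝ => min y a - min y b :=
    (measurable_id.min measurable_const).sub (measurable_id.min measurable_const)
  have hintmin : Integrable (fun y : ℝ => min y a - min y b) ν := by
    refine Integrable.mono' (integrable_const (max |a - b| 0)) hm.aestronglyMeasurable ?_
    filter_upwards with y
    rw [Real.norm_eq_abs]
    calc |min y a - min y b| ≤ max |y - y| |a - b| := abs_min_sub_min_le_max y a y b
      _ ≤ max |a - b| 0 := by rw [sub_self, abs_zero, max_comm]
  have hDeq : ∫ y, (((1 - δ) * b - min (b - y) 0) - ((1 - δ) * a - min (a - y) 0)) ∂ν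
      = (1 - δ) * (b - a) + ∫ y, (min y a - min y b) ∂ν := by
    rw [hrw, integral_add (integrable_const _) hintmin, integral_const]
    simp
  have hFint : ∀ u v : ℝ, IntervalIntegrable F volume u v := fun u v =>
    (F_mono ν).intervalIntegrable
  rcases le_total a b with hab | hba
  · -- case a ≤ b
    have hfub : ∫ y, (min y a - min y b) ∂ν = -∫ t in Set.Ioc a b, (ν (Ioi t)).toReal := by
      rw [← fubini_min ν a b hab, ← integral_neg]
      congr 1; funext y; ring
    have hD2 : ∫ y, (((1 - δ) * b - min (b - y) 0) - ((1 - δ) * a - min (a - y) 0)) ∂ν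
        = ∫ t in a..b, (F t - δ) := by
      rw [hDeq, hfub]
      have h1 : ∫ t in Set.Ioc a b, (ν (Ioi t)).toReal = ∫ t in a..b, (1 - F t) := by
        rw [intervalIntegral.integral_of_le hab]
        exact integral_congr_ae (Filter.Eventually.of_forall fun t => hIoi t)
      rw [h1]
      have h2 : IntervalIntegrable (fun t => 1 - F t) volume a b :=
        (intervalIntegrable_const).sub (hFint a b)
      have h3 : ∫ t in a..b, (F t - δ) = ∫ t in a..b, ((1 - δ) - (1 - F t)) := by
        congr 1; funext t; ring
      rw [h3, intervalIntegral.integral_sub intervalIntegrable_const h2,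
        intervalIntegral.integral_const, smul_eq_mul]
      ring
    have hpt : ∀ t ∈ Set.Icc a b, 0 ≤ F t - δ ∧ F t - δ ≤ Kp * (t - a) := by
      intro t ht
      constructor
      · rw [← Fa]; simp only [sub_nonneg]; exact F_mono ν ht.1
      · have := F_diff ν a t ht.1
        rw [← Fa]
        calc F t - F a = (ν (Ioc a t)).toReal := this
          _ ≤ Kp * (t - a) := density_bound ν hac hKp hbd a t ht.1
    constructor
    · rw [hD2]
      exact intervalIntegral.integral_nonneg hab fun t ht => (hpt t ht).1
    · rw [hD2]
      have hKint : IntervalIntegrable (fun t => Kp * (t - a)) volume a b :=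
        (continuous_const.mul (continuous_id.sub continuous_const)).intervalIntegrable a b
      have := intervalIntegral.integral_mono_on hab ((hFint a b).sub intervalIntegrable_const)
        hKint (fun t ht => (hpt t ht).2)
      refine this.trans ?_
      have hcomp : ∫ t in a..b, Kp * (t - a) = Kp * ((b ^ 2 - a ^ 2) / 2 - (b - a) * a) := by
        rw [intervalIntegral.integral_const_mul]
        have hid : IntervalIntegrable (fun x : ℝ => x) volume a b :=
          continuous_id.intervalIntegrable a b
        rw [intervalIntegral.integral_sub hid intervalIntegrable_const, integral_id,
          intervalIntegral.integral_const, smul_eq_mul]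
      rw [hcomp]
      nlinarith [sq_nonneg (b - a)]
  · -- case b ≤ a
    have hfub : ∫ y, (min y a - min y b) ∂ν = ∫ t in Set.Ioc b a, (ν (Ioi t)).toReal :=
      fubini_min ν b a hba
    have hD2 : ∫ y, (((1 - δ) * b - min (b - y) 0) - ((1 - δ) * a - min (a - y) 0)) ∂ν
        = ∫ t in b..a, (δ - F t) := by
      rw [hDeq, hfub]
      have h1 : ∫ t in Set.Ioc b a, (ν (Ioi t)).toReal = ∫ t in b..a, (1 - F t) := by
        rw [intervalIntegral.integral_of_le hba]
        exact integral_congr_ae (Filter.Eventually.of_forall fun t => hIoi t)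
      rw [h1]
      have h2 : IntervalIntegrable (fun t => 1 - F t) volume b a :=
        (intervalIntegrable_const).sub (hFint b a)
      have h3 : ∫ t in b..a, (δ - F t) = ∫ t in b..a, ((1 - F t) - (1 - δ)) := by
        congr 1; funext t; ring
      rw [h3, intervalIntegral.integral_sub h2 intervalIntegrable_const,
        intervalIntegral.integral_const, smul_eq_mul]
      ring
    have hpt : ∀ t ∈ Set.Icc b a, 0 ≤ δ - F t ∧ δ - F t ≤ Kp * (a - t) := by
      intro t ht
      constructor
      · rw [← Fa]; simp only [sub_nonneg]; exact F_mono ν ht.2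
      · have := F_diff ν t a ht.2
        rw [← Fa]
        calc F a - F t = (ν (Ioc t a)).toReal := this
          _ ≤ Kp * (a - t) := density_bound ν hac hKp hbd t a ht.2
    constructor
    · rw [hD2]
      exact intervalIntegral.integral_nonneg hba fun t ht => (hpt t ht).1
    · rw [hD2]
      have hKint : IntervalIntegrable (fun t => Kp * (a - t)) volume b a :=
        (continuous_const.mul (continuous_const.sub continuous_id)).intervalIntegrable b a
      have := intervalIntegral.integral_mono_on hba
        (intervalIntegrable_const.sub (hFint b a)) hKint (fun t ht => (hpt t ht).2)
      refine this.trans ?_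
      have hcomp : ∫ t in b..a, Kp * (a - t) = Kp * ((a - b) * a - (a ^ 2 - b ^ 2) / 2) := by
        rw [intervalIntegral.integral_const_mul]
        have hid : IntervalIntegrable (fun x : ℝ => x) volume b a :=
          continuous_id.intervalIntegrable b a
        rw [intervalIntegral.integral_sub intervalIntegrable_const hid,
          integral_id, intervalIntegral.integral_const, smul_eq_mul]
      rw [hcomp]
      nlinarith [sq_nonneg (a - b)]

end AuxPinball

/-- Excess-risk bound for the pinball-type potential
`L(l, y) = (1 - δ)·l - min(l - y, 0)` (key step of the no-harm Theorem 4.5): if the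
conditional density of `Y` given `X = x` is bounded by `K_p` and `l*` is a conditional
`δ`-quantile (`P(Y ≤ l*(X) | X) = δ` a.s.), then
`0 ≤ E[L(l₀(X),Y)] - E[L(l*(X),Y)] ≤ K_p · E[(l₀(X) - l*(X))²]`. -/
theorem pinball_excess_risk {𝒳 : Type*} [MeasurableSpace 𝒳]
    (μ : Measure (𝒳 × ℝ)) [IsProbabilityMeasure μ]
    (κy : Kernel 𝒳 ℝ) [IsMarkovKernel κy]
    (hdecomp : μ = μ.fst ⊗ₘ κy)
    (Kp : ℝ) (hKp : 0 < Kp)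
    (hdensity : ∀ᵐ x ∂μ.fst, κy x ≪ (volume : Measure ℝ) ∧
      ∀ᵐ y ∂(volume : Measure ℝ), (κy x).rnDeriv volume y ≤ ENNReal.ofReal Kp)
    (δ : ℝ) (hδ : δ ∈ Set.Icc (0 : ℝ) 1)
    (lstar : 𝒳 → ℝ) (hlstar : Measurable lstar)
    (hquantile : ∀ᵐ x ∂μ.fst, κy x {y : ℝ | y ≤ lstar x} = ENNReal.ofReal δ)
    (l₀ : 𝒳 → ℝ) (hl₀ : Measurable l₀)
    (hint1 : Integrable (fun q : 𝒳 × ℝ => (1 - δ) * l₀ q.1 - min (l₀ q.1 - q.2) 0) μ)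
    (hint2 : Integrable (fun q : 𝒳 × ℝ =>
      (1 - δ) * lstar q.1 - min (lstar q.1 - q.2) 0) μ)
    (hint3 : Integrable (fun q : 𝒳 × ℝ => (l₀ q.1 - lstar q.1) ^ 2) μ) :
    0 ≤ (∫ q, ((1 - δ) * l₀ q.1 - min (l₀ q.1 - q.2) 0) ∂μ)
        - (∫ q, ((1 - δ) * lstar q.1 - min (lstar q.1 - q.2) 0) ∂μ) ∧
      (∫ q, ((1 - δ) * l₀ q.1 - min (l₀ q.1 - q.2) 0) ∂μ)
          - (∫ q, ((1 - δ) * lstar q.1 - min (lstar q.1 - q.2) 0) ∂μ)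
        ≤ Kp * ∫ q, (l₀ q.1 - lstar q.1) ^ 2 ∂μ := by
  have hδ0 := hδ.1
  set f₀ : 𝒳 × ℝ → ℝ := fun q => (1 - δ) * l₀ q.1 - min (l₀ q.1 - q.2) 0 with hf₀
  set f₁ : 𝒳 × ℝ → ℝ := fun q => (1 - δ) * lstar q.1 - min (lstar q.1 - q.2) 0 with hf₁
  have hφm : Measurable fun q : 𝒳 × ℝ => f₀ q - f₁ q := by
    apply Measurable.sub
    · exact (measurable_const.mul (hl₀.comp measurable_fst)).sub
        (((hl₀.comp measurable_fst).sub measurable_snd).min measurable_const)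
    · exact (measurable_const.mul (hlstar.comp measurable_fst)).sub
        (((hlstar.comp measurable_fst).sub measurable_snd).min measurable_const)
  have hint1' : Integrable f₀ (μ.fst ⊗ₘ κy) := hdecomp ▸ hint1
  have hint2' : Integrable f₁ (μ.fst ⊗ₘ κy) := hdecomp ▸ hint2
  have hint3' : Integrable (fun q : 𝒳 × ℝ => (l₀ q.1 - lstar q.1) ^ 2) (μ.fst ⊗ₘ κy) :=
    hdecomp ▸ hint3
  have key : ∀ᵐ x ∂μ.fst, 0 ≤ ∫ y, (f₀ (x, y) - f₁ (x, y)) ∂κy x ∧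
      ∫ y, (f₀ (x, y) - f₁ (x, y)) ∂κy x ≤ Kp * (l₀ x - lstar x) ^ 2 := by
    filter_upwards [hdensity, hquantile] with x hx hqx
    exact inner_bound (κy x) hx.1 hKp hx.2 hδ0 (lstar x) (l₀ x) hqx
  have hDm : AEStronglyMeasurable (fun x => ∫ y, (f₀ (x, y) - f₁ (x, y)) ∂κy x) μ.fst :=
    (StronglyMeasurable.integral_kernel_prod_right' hφm.stronglyMeasurable).aestronglyMeasurable
  have hBm : AEStronglyMeasurable (fun q : 𝒳 × ℝ => (l₀ q.1 - lstar q.1) ^ 2) (μ.fst ⊗ₘ κy) :=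
    (((hl₀.comp measurable_fst).sub (hlstar.comp measurable_fst)).pow_const 2).aestronglyMeasurable
  have hB : Integrable (fun x => (l₀ x - lstar x) ^ 2) μ.fst := by
    have h := ((Measure.integrable_compProd_iff hBm).mp hint3').2
    refine (integrable_congr (Filter.Eventually.of_forall fun x => ?_)).mp h
    simp [Real.norm_eq_abs, abs_of_nonneg (sq_nonneg (l₀ x - lstar x))]
  have e0 : ∫ q, f₀ q ∂μ - ∫ q, f₁ q ∂μ
      = ∫ x, ∫ y, (f₀ (x, y) - f₁ (x, y)) ∂κy x ∂μ.fst := by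
    rw [← integral_sub hint1 hint2]
    conv_lhs => rw [hdecomp]
    exact Measure.integral_compProd (hint1'.sub hint2')
  have e3 : ∫ q, (l₀ q.1 - lstar q.1) ^ 2 ∂μ = ∫ x, (l₀ x - lstar x) ^ 2 ∂μ.fst := by
    conv_lhs => rw [hdecomp]
    rw [Measure.integral_compProd hint3']
    refine integral_congr_ae (Filter.Eventually.of_forall fun x => ?_)
    simp
  have hDint : Integrable (fun x => ∫ y, (f₀ (x, y) - f₁ (x, y)) ∂κy x) μ.fst := by
    refine Integrable.mono' (hB.const_mul Kp) hDm ?_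
    filter_upwards [key] with x hx
    rw [Real.norm_eq_abs, abs_of_nonneg hx.1]; exact hx.2
  constructor
  · rw [e0]
    exact integral_nonneg_of_ae (key.mono fun x hx => hx.1)
  · rw [e0, e3]
    calc ∫ x, ∫ y, (f₀ (x, y) - f₁ (x, y)) ∂κy x ∂μ.fst
        ≤ ∫ x, Kp * (l₀ x - lstar x) ^ 2 ∂μ.fst :=
          integral_mono_ae hDint (hB.const_mul Kp) (key.mono fun x hx => hx.2)
      _ = Kp * ∫ x, (l₀ x - lstar x) ^ 2 ∂μ.fst := integral_const_mul Kp _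
end

section
/- Let μ be a probability measure on 𝒳 × [0,1] (the source distribution of (x, y)), let m(x) = E[y | x] be the conditional mean, and let f, p : 𝒳 → [0,1] be measurable. Let e, σ : 𝒳 → ℝ be measurable with c₁ ≤ σ(x), e(x) ≤ c₂ for constants 0 < c₁ < c₂ < 1, set w_e(x) = (1 − e(x))/e(x), w_σ(x) = (1 − σ(x))/σ(x), B = (1 − c₁)/c₁, β₁(p) = √(E[(p(x) − m(x))⁴]) and β₂(σ) = √(E[(w_σ(x) − w_e(x))⁴]). If |E[w_σ(x)·(f(x) − p(x))·(f(x) − y)]| ≤ α, then |E[w_e(x)·(f(x) − m(x))·(f(x) − y)]| ≤ α + √(2B²·β₁(p) + 2·β₂(σ)). -/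
open MeasureTheory ProbabilityTheory

private lemma int_bdd {Ω : Type*} [MeasurableSpace Ω] {μ : Measure Ω} [IsFiniteMeasure μ]
    {g : Ω → ℝ} (hg : AEStronglyMeasurable g μ) {C : ℝ} (h : ∀ᵐ ω ∂μ, |g ω| ≤ C) :
    Integrable g μ :=
  Integrable.mono' (integrable_const C) hg (by
    filter_upwards [h] with ω hω; rwa [Real.norm_eq_abs])

/-- For a probability measure, `∫ g ≤ √(∫ g²)` when `g ≥ 0` a.e. -/
private lemma int_le_sqrt {Ω : Type*} [MeasurableSpace Ω] (μ : Measure Ω)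
    [IsProbabilityMeasure μ] {g : Ω → ℝ} (hg : 0 ≤ᵐ[μ] g) (hgi : Integrable g μ)
    (hg2 : Integrable (fun x => g x ^ 2) μ) :
    ∫ x, g x ∂μ ≤ Real.sqrt (∫ x, g x ^ 2 ∂μ) := by
  set A := ∫ x, g x ^ 2 ∂μ with hA
  have hA0 : 0 ≤ A := integral_nonneg fun x => sq_nonneg _
  have key : ∀ s : ℝ, 0 < s → ∫ x, g x ∂μ ≤ (A + s ^ 2) / (2 * s) := by
    intro s hs
    have h1 : ∫ x, g x ∂μ ≤ ∫ x, (g x ^ 2 + s ^ 2) / (2 * s) ∂μ := by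
      refine integral_mono_ae hgi ((hg2.add (integrable_const _)).div_const _) ?_
      filter_upwards [hg] with x hx
      rw [le_div_iff₀ (by positivity)]
      nlinarith [sq_nonneg (g x - s)]
    calc ∫ x, g x ∂μ ≤ ∫ x, (g x ^ 2 + s ^ 2) / (2 * s) ∂μ := h1
      _ = (A + s ^ 2) / (2 * s) := by
          rw [integral_div, integral_add hg2 (integrable_const _), integral_const]
          simp [hA]
  rcases eq_or_lt_of_le hA0 with hA' | hA'
  · rw [← hA', Real.sqrt_zero]
    refine le_of_forall_pos_le_add fun ε hε => ?_
    have := key ε hε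
    rw [← hA'] at this
    calc ∫ x, g x ∂μ ≤ (0 + ε ^ 2) / (2 * ε) := this
      _ = ε / 2 := by field_simp; ring
      _ ≤ 0 + ε := by linarith
  · have hs : 0 < Real.sqrt A := Real.sqrt_pos.mpr hA'
    have := key (Real.sqrt A) hs
    rwa [Real.sq_sqrt hA0, show (A + A) / (2 * Real.sqrt A) = A / Real.sqrt A by ring,
      Real.div_sqrt] at this

private lemma main_aux {Ω : Type*} [MeasurableSpace Ω] (μ : Measure Ω)
    [IsProbabilityMeasure μ] (r a b u v : Ω → ℝ) (B α : ℝ) (hB : 0 ≤ B)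
    (hrm : Measurable r) (ham : Measurable a) (hbm : Measurable b)
    (hum : Measurable u) (hvm : Measurable v)
    (hr : ∀ᵐ ω ∂μ, |r ω| ≤ 1) (ha : ∀ᵐ ω ∂μ, |a ω| ≤ 1) (hb : ∀ ω, |b ω| ≤ 1)
    (hu : ∀ ω, u ω ∈ Set.Icc 0 B) (hv : ∀ ω, v ω ∈ Set.Icc 0 B)
    (hcal : |∫ ω, v ω * b ω * r ω ∂μ| ≤ α) :
    |∫ ω, u ω * (b ω + a ω) * r ω ∂μ|
      ≤ α + Real.sqrt (2 * B ^ 2 * Real.sqrt (∫ ω, a ω ^ 4 ∂μ)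
          + 2 * Real.sqrt (∫ ω, (v ω - u ω) ^ 4 ∂μ)) := by
  set Z : Ω → ℝ := fun ω => u ω * a ω + (u ω - v ω) * b ω with hZ
  have hZm : Measurable Z := ((hum.mul ham).add ((hum.sub hvm).mul hbm))
  have hZbd : ∀ᵐ ω ∂μ, |Z ω| ≤ 2 * B := by
    filter_upwards [ha] with ω hω
    have h1 : |u ω * a ω| ≤ B := by
      rw [abs_mul]
      calc |u ω| * |a ω| ≤ B * 1 := by
            refine mul_le_mul ?_ hω (abs_nonneg _) hB
            rw [abs_of_nonneg (hu ω).1]; exact (hu ω).2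
        _ = B := mul_one B
    have h2 : |(u ω - v ω) * b ω| ≤ B := by
      rw [abs_mul]
      calc |u ω - v ω| * |b ω| ≤ B * 1 := by
            refine mul_le_mul ?_ (hb ω) (abs_nonneg _) hB
            rw [abs_sub_le_iff]
            constructor <;> nlinarith [(hu ω).1, (hu ω).2, (hv ω).1, (hv ω).2]
        _ = B := mul_one B
    calc |Z ω| ≤ |u ω * a ω| + |(u ω - v ω) * b ω| := abs_add_le _ _
      _ ≤ 2 * B := by linarith
  -- integrabilities
  have hS_int : Integrable (fun ω => v ω * b ω * r ω) μ := by
    refine int_bdd (((hvm.mul hbm).mul hrm).aestronglyMeasurable) (C := B) ?_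
    filter_upwards [hr] with ω hω
    rw [abs_mul, abs_mul]
    calc |v ω| * |b ω| * |r ω| ≤ B * 1 * 1 := by
          refine mul_le_mul (mul_le_mul ?_ (hb ω) (abs_nonneg _) hB) hω (abs_nonneg _)
            (by positivity)
          rw [abs_of_nonneg (hv ω).1]; exact (hv ω).2
      _ = B := by ring
  have hG_int : Integrable (fun ω => r ω * Z ω) μ := by
    refine int_bdd ((hrm.mul hZm).aestronglyMeasurable) (C := 2 * B) ?_
    filter_upwards [hr, hZbd] with ω h1 h2
    rw [abs_mul]
    calc |r ω| * |Z ω| ≤ 1 * (2 * B) := mul_le_mul h1 h2 (abs_nonneg _) zero_le_one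
      _ = 2 * B := one_mul _
  have hZabs_int : Integrable (fun ω => |Z ω|) μ := by
    refine int_bdd (hZm.abs.aestronglyMeasurable) (C := 2 * B) ?_
    filter_upwards [hZbd] with ω h; rwa [abs_abs]
  have hZ2_int : Integrable (fun ω => Z ω ^ 2) μ := by
    refine int_bdd ((hZm.pow_const 2).aestronglyMeasurable) (C := (2 * B) ^ 2) ?_
    filter_upwards [hZbd] with ω h
    rw [abs_pow]
    exact pow_le_pow_left₀ (abs_nonneg _) h 2
  have ha2_int : Integrable (fun ω => a ω ^ 2) μ := by
    refine int_bdd ((ham.pow_const 2).aestronglyMeasurable) (C := 1) ?_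
    filter_upwards [ha] with ω h
    rw [abs_pow]
    simpa using pow_le_pow_left₀ (abs_nonneg _) h 2
  have ha4_int : Integrable (fun ω => a ω ^ 4) μ := by
    refine int_bdd ((ham.pow_const 4).aestronglyMeasurable) (C := 1) ?_
    filter_upwards [ha] with ω h
    rw [abs_pow]
    simpa using pow_le_pow_left₀ (abs_nonneg _) h 4
  have hvu_bd : ∀ ω, |v ω - u ω| ≤ B := by
    intro ω
    rw [abs_sub_le_iff]
    constructor <;> nlinarith [(hu ω).1, (hu ω).2, (hv ω).1, (hv ω).2]
  have hvu2_int : Integrable (fun ω => (v ω - u ω) ^ 2) μ := by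
    refine int_bdd (((hvm.sub hum).pow_const 2).aestronglyMeasurable) (C := B ^ 2)
      (Filter.Eventually.of_forall fun ω => ?_)
    rw [abs_pow]
    exact pow_le_pow_left₀ (abs_nonneg _) (hvu_bd ω) 2
  have hvu4_int : Integrable (fun ω => (v ω - u ω) ^ 4) μ := by
    refine int_bdd (((hvm.sub hum).pow_const 4).aestronglyMeasurable) (C := B ^ 4)
      (Filter.Eventually.of_forall fun ω => ?_)
    rw [abs_pow]
    exact pow_le_pow_left₀ (abs_nonneg _) (hvu_bd ω) 4
  -- decomposition
  have hdecomp : ∫ ω, u ω * (b ω + a ω) * r ω ∂μ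
      = (∫ ω, v ω * b ω * r ω ∂μ) + ∫ ω, r ω * Z ω ∂μ := by
    rw [← integral_add hS_int hG_int]
    refine integral_congr_ae (Filter.Eventually.of_forall fun ω => ?_)
    simp only [hZ]; ring
  -- bound on ∫ |Z|
  have step1 : |∫ ω, r ω * Z ω ∂μ| ≤ ∫ ω, |Z ω| ∂μ := by
    calc |∫ ω, r ω * Z ω ∂μ| ≤ ∫ ω, |r ω| * |Z ω| ∂μ := by
          simpa [Real.norm_eq_abs, abs_mul] using
            norm_integral_le_integral_norm (μ := μ) (fun ω => r ω * Z ω)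
      _ ≤ ∫ ω, |Z ω| ∂μ := by
          refine integral_mono_ae (by simpa [abs_mul] using hG_int.abs) hZabs_int ?_
          filter_upwards [hr] with ω h
          calc |r ω| * |Z ω| ≤ 1 * |Z ω| := mul_le_mul_of_nonneg_right h (abs_nonneg _)
            _ = |Z ω| := one_mul _
  have step2 : ∫ ω, |Z ω| ∂μ ≤ Real.sqrt (∫ ω, Z ω ^ 2 ∂μ) := by
    have h := int_le_sqrt μ (g := fun ω => |Z ω|)
      (Filter.Eventually.of_forall fun ω => abs_nonneg _) hZabs_int
      (by simpa [sq_abs] using hZ2_int)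
    simpa [sq_abs] using h
  have step3 : ∫ ω, Z ω ^ 2 ∂μ
      ≤ 2 * B ^ 2 * (∫ ω, a ω ^ 2 ∂μ) + 2 * ∫ ω, (v ω - u ω) ^ 2 ∂μ := by
    have hpt : ∀ᵐ ω ∂μ, Z ω ^ 2 ≤ 2 * B ^ 2 * a ω ^ 2 + 2 * (v ω - u ω) ^ 2 := by
      refine Filter.Eventually.of_forall fun ω => ?_
      have h1 : u ω ^ 2 * a ω ^ 2 ≤ B ^ 2 * a ω ^ 2 :=
        mul_le_mul_of_nonneg_right (pow_le_pow_left₀ (hu ω).1 (hu ω).2 2) (sq_nonneg _)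
      have h2 : (u ω - v ω) ^ 2 * b ω ^ 2 ≤ (v ω - u ω) ^ 2 := by
        have hb2 : b ω ^ 2 ≤ 1 := by simpa [sq_abs] using pow_le_pow_left₀ (abs_nonneg _) (hb ω) 2
        calc (u ω - v ω) ^ 2 * b ω ^ 2 ≤ (u ω - v ω) ^ 2 * 1 :=
              mul_le_mul_of_nonneg_left hb2 (sq_nonneg _)
          _ = (v ω - u ω) ^ 2 := by ring
      simp only [hZ]
      nlinarith [sq_nonneg (u ω * a ω - (u ω - v ω) * b ω)]
    calc ∫ ω, Z ω ^ 2 ∂μ ≤ ∫ ω, (2 * B ^ 2 * a ω ^ 2 + 2 * (v ω - u ω) ^ 2) ∂μ :=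
          integral_mono_ae hZ2_int ((ha2_int.const_mul _).add (hvu2_int.const_mul _)) hpt
      _ = 2 * B ^ 2 * (∫ ω, a ω ^ 2 ∂μ) + 2 * ∫ ω, (v ω - u ω) ^ 2 ∂μ := by
          rw [integral_add (ha2_int.const_mul _) (hvu2_int.const_mul _),
            integral_const_mul, integral_const_mul]
  have step4 : ∫ ω, a ω ^ 2 ∂μ ≤ Real.sqrt (∫ ω, a ω ^ 4 ∂μ) := by
    have h := int_le_sqrt μ (g := fun ω => a ω ^ 2)
      (Filter.Eventually.of_forall fun ω => sq_nonneg _) ha2_int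
      (by simpa [← pow_mul] using ha4_int)
    simpa [← pow_mul] using h
  have step5 : ∫ ω, (v ω - u ω) ^ 2 ∂μ ≤ Real.sqrt (∫ ω, (v ω - u ω) ^ 4 ∂μ) := by
    have h := int_le_sqrt μ (g := fun ω => (v ω - u ω) ^ 2)
      (Filter.Eventually.of_forall fun ω => sq_nonneg _) hvu2_int
      (by simpa [← pow_mul] using hvu4_int)
    simpa [← pow_mul] using h
  have step6 : Real.sqrt (∫ ω, Z ω ^ 2 ∂μ)
      ≤ Real.sqrt (2 * B ^ 2 * Real.sqrt (∫ ω, a ω ^ 4 ∂μ)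
          + 2 * Real.sqrt (∫ ω, (v ω - u ω) ^ 4 ∂μ)) := by
    refine Real.sqrt_le_sqrt ?_
    have hB2 : (0:ℝ) ≤ 2 * B ^ 2 := by positivity
    have h4 := mul_le_mul_of_nonneg_left step4 hB2
    linarith [step3, step5]
  calc |∫ ω, u ω * (b ω + a ω) * r ω ∂μ|
      ≤ |∫ ω, v ω * b ω * r ω ∂μ| + |∫ ω, r ω * Z ω ∂μ| := by
        rw [hdecomp]; exact abs_add_le _ _
    _ ≤ α + Real.sqrt (2 * B ^ 2 * Real.sqrt (∫ ω, a ω ^ 4 ∂μ)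
          + 2 * Real.sqrt (∫ ω, (v ω - u ω) ^ 4 ∂μ)) := by
        exact add_le_add hcal (step1.trans (step2.trans step6))

/-- Universally adaptive predictor under ℓ₂ loss (Theorem 5.1): multicalibration of `f`
on the source against the auditor `w_σ(x)·(f(x) - p(x))` transfers to a bound on the
propensity-reweighted estimation error `E[w_e(x)(f(x) - m(x))(f(x) - y)]`, up to
the approximation errors `β₁(p)` and `β₂(σ)`. -/
theorem universally_adaptive_predictor {𝒳 : Type*} [MeasurableSpace 𝒳]
    (μ : Measure (𝒳 × ℝ)) [IsProbabilityMeasure μ]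
    (hy01 : ∀ᵐ q ∂μ, q.2 ∈ Set.Icc (0 : ℝ) 1)
    (κy : Kernel 𝒳 ℝ) [IsMarkovKernel κy]
    (hdecomp : μ = μ.fst ⊗ₘ κy)
    (m : 𝒳 → ℝ) (hm : ∀ x, m x = ∫ y, y ∂(κy x))
    (f p : 𝒳 → ℝ) (hf : Measurable f) (hp : Measurable p)
    (hf01 : ∀ x, f x ∈ Set.Icc (0 : ℝ) 1) (hp01 : ∀ x, p x ∈ Set.Icc (0 : ℝ) 1)
    (e σ : 𝒳 → ℝ) (he : Measurable e) (hσ : Measurable σ)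
    (c₁ c₂ : ℝ) (hc₁ : 0 < c₁) (hc₁₂ : c₁ < c₂) (hc₂ : c₂ < 1)
    (hebd : ∀ x, e x ∈ Set.Icc c₁ c₂) (hσbd : ∀ x, σ x ∈ Set.Icc c₁ c₂)
    (α : ℝ) (hα : 0 < α)
    (hcal : |∫ q, ((1 - σ q.1) / σ q.1) * (f q.1 - p q.1) * (f q.1 - q.2) ∂μ| ≤ α) :
    |∫ q, ((1 - e q.1) / e q.1) * (f q.1 - m q.1) * (f q.1 - q.2) ∂μ|
      ≤ α + Real.sqrt
          (2 * ((1 - c₁) / c₁) ^ 2 * Real.sqrt (∫ q, (p q.1 - m q.1) ^ 4 ∂μ)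
            + 2 * Real.sqrt
                (∫ q, ((1 - σ q.1) / σ q.1 - (1 - e q.1) / e q.1) ^ 4 ∂μ)) := by
  set B : ℝ := (1 - c₁) / c₁ with hB
  have hB0 : 0 ≤ B := div_nonneg (by linarith) hc₁.le
  -- measurability of m
  have hmm : Measurable m := by
    have h : StronglyMeasurable (fun x : 𝒳 => ∫ y, (Prod.snd : 𝒳 × ℝ → ℝ) (x, y) ∂(κy x)) :=
      measurable_snd.stronglyMeasurable.integral_kernel_prod_right'
    have : m = fun x => ∫ y, y ∂(κy x) := funext hm
    rw [this]
    exact h.measurable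
  -- a.e. bound on m
  have hmfst : ∀ᵐ x ∂μ.fst, m x ∈ Set.Icc (0 : ℝ) 1 := by
    have h1 : ∀ᵐ x ∂μ.fst, ∀ᵐ y ∂κy x, y ∈ Set.Icc (0 : ℝ) 1 :=
      Measure.ae_ae_of_ae_compProd (p := fun q : 𝒳 × ℝ => q.2 ∈ Set.Icc (0 : ℝ) 1)
        (by rw [← hdecomp]; exact hy01)
    filter_upwards [h1] with x hx
    have hint : Integrable (fun y : ℝ => y) (κy x) := by
      refine Integrable.mono' (integrable_const 1) measurable_id.aestronglyMeasurable ?_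
      filter_upwards [hx] with y hy
      rw [Real.norm_eq_abs, abs_le]
      exact ⟨by linarith [hy.1], hy.2⟩
    constructor
    · rw [hm]
      exact integral_nonneg_of_ae (by filter_upwards [hx] with y hy; exact hy.1)
    · rw [hm]
      calc ∫ y, y ∂κy x ≤ ∫ _, (1 : ℝ) ∂κy x :=
            integral_mono_ae hint (integrable_const 1)
              (by filter_upwards [hx] with y hy; exact hy.2)
        _ = 1 := by simp
  have hmae : ∀ᵐ q ∂μ, m q.1 ∈ Set.Icc (0 : ℝ) 1 := by
    have hfst : μ.fst = μ.map Prod.fst := rfl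
    rw [hfst] at hmfst
    exact ae_of_ae_map measurable_fst.aemeasurable hmfst
  -- bounds on the weights
  have hwe : ∀ x, (1 - e x) / e x ∈ Set.Icc 0 B := by
    intro x
    obtain ⟨h1, h2⟩ := hebd x
    exact ⟨div_nonneg (by linarith) (by linarith),
      div_le_div₀ (by linarith) (by linarith) hc₁ h1⟩
  have hwσ : ∀ x, (1 - σ x) / σ x ∈ Set.Icc 0 B := by
    intro x
    obtain ⟨h1, h2⟩ := hσbd x
    exact ⟨div_nonneg (by linarith) (by linarith),
      div_le_div₀ (by linarith) (by linarith) hc₁ h1⟩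
  -- apply main_aux with r = f - y, a = p - m, b = f - p, u = w_e, v = w_σ
  have key := main_aux μ
    (fun q : 𝒳 × ℝ => f q.1 - q.2)
    (fun q : 𝒳 × ℝ => p q.1 - m q.1)
    (fun q : 𝒳 × ℝ => f q.1 - p q.1)
    (fun q : 𝒳 × ℝ => (1 - e q.1) / e q.1)
    (fun q : 𝒳 × ℝ => (1 - σ q.1) / σ q.1)
    B α hB0
    ((hf.comp measurable_fst).sub measurable_snd)
    ((hp.comp measurable_fst).sub (hmm.comp measurable_fst))
    ((hf.comp measurable_fst).sub (hp.comp measurable_fst))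
    (((measurable_const.sub he).div he).comp measurable_fst)
    (((measurable_const.sub hσ).div hσ).comp measurable_fst)
    (by
      filter_upwards [hy01] with q hq
      obtain ⟨h1, h2⟩ := hf01 q.1
      rw [abs_le]; exact ⟨by linarith [hq.2], by linarith [hq.1]⟩)
    (by
      filter_upwards [hmae] with q hq
      obtain ⟨h1, h2⟩ := hp01 q.1
      rw [abs_le]; exact ⟨by linarith [hq.2], by linarith [hq.1]⟩)
    (fun q => by
      obtain ⟨h1, h2⟩ := hf01 q.1
      obtain ⟨h3, h4⟩ := hp01 q.1
      show |f q.1 - p q.1| ≤ 1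
      rw [abs_le]; exact ⟨by linarith, by linarith⟩)
    (fun q => hwe q.1)
    (fun q => hwσ q.1)
    (by
      have heq : (fun q : 𝒳 × ℝ => ((1 - σ q.1) / σ q.1) * (f q.1 - p q.1) * (f q.1 - q.2))
          = fun q : 𝒳 × ℝ => ((1 - σ q.1) / σ q.1) * (f q.1 - p q.1) * (f q.1 - q.2) := rfl
      exact hcal)
  have heq1 : (fun q : 𝒳 × ℝ =>
      ((1 - e q.1) / e q.1) * ((f q.1 - p q.1) + (p q.1 - m q.1)) * (f q.1 - q.2))
      = fun q : 𝒳 × ℝ => ((1 - e q.1) / e q.1) * (f q.1 - m q.1) * (f q.1 - q.2) := by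
    funext q; ring
  rw [heq1] at key
  have heq2 : (fun q : 𝒳 × ℝ => ((1 - σ q.1) / σ q.1 - (1 - e q.1) / e q.1) ^ 4)
      = fun q : 𝒳 × ℝ => ((1 - σ q.1) / σ q.1 - (1 - e q.1) / e q.1) ^ 4 := rfl
  exact key
end
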